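/- Let F be a field, m, n natural numbers, A an m×n matrix over F, and b a vector in F^m. Let C = χ · S, where S is the (m+n)×(m+n) block matrix [[0, A],[Aᵀ, 0]] with entries embedded into F(X), and χ is the diagonal matrix over F(X) with diagonal entries X^0, …, X^{m+n−1}. Let s be the multiplicity of 0 as a root of the characteristic polynomial p_C of C, and let q = p_C / Y^s (the quotient of p_C on dividing by the monic polynomial Y^s). Let b̃ be the vector in F(X)^{m+n} whose first m entries are the images of the entries of b in F(X) and whose remaining n entries are 0. Then the linear system A·x = b has a solution x ∈ F^n if and only if q(C)·(χ·b̃) = 0, where q(C) denotes the evaluation of the polynomial q at the matrix C. -/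

import Mathlib

open Matrix Polynomial

theorem mulmuley_core {F : Type*} [Field F] {k : ℕ} (p : Fin k → F[X])
    (H : ∀ a b : ℕ, ∑ i : Fin k, (p i).coeff a * ((X : F[X]) ^ (i : ℕ) * p i).coeff b = 0) :
    p = 0 := by
  by_contra hp
  have hne : ∃ i, p i ≠ 0 := by
    by_contra h
    push_neg at h
    exact hp (funext fun i => h i)
  classical
  set T : Finset (Fin k) := Finset.univ.filter (fun i => p i ≠ 0) with hT
  have hTne : T.Nonempty := by
    obtain ⟨i, hi⟩ := hne
    exact ⟨i, by simp [hT, hi]⟩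
  set φ : Fin k → ℕ := fun i => (i : ℕ) + (p i).natDegree with hφ
  set M : ℕ := T.sup φ with hM
  set T' : Finset (Fin k) := T.filter (fun i => φ i = M) with hT'
  have hT'ne : T'.Nonempty := by
    obtain ⟨i, hi, hmax⟩ := Finset.exists_mem_eq_sup T hTne φ
    exact ⟨i, by simp [hT', hi, hmax.symm, hM]⟩
  set i₁ : Fin k := T'.min' hT'ne with hi₁
  have hi₁mem : i₁ ∈ T' := T'.min'_mem hT'ne
  have hi₁T : i₁ ∈ T := (Finset.mem_filter.mp hi₁mem).1
  have hpi₁ : p i₁ ≠ 0 := (Finset.mem_filter.mp hi₁T).2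
  have hφi₁ : (i₁ : ℕ) + (p i₁).natDegree = M := (Finset.mem_filter.mp hi₁mem).2
  -- key coefficient facts
  have key := H (M - (i₁ : ℕ)) M
  have hdeg₁ : (p i₁).natDegree = M - (i₁ : ℕ) := by omega
  have hterm : ∀ i : Fin k, i ≠ i₁ →
      (p i).coeff (M - (i₁ : ℕ)) * ((X : F[X]) ^ (i : ℕ) * p i).coeff M = 0 := by
    intro i hne'
    by_contra h0
    have h1 : (p i).coeff (M - (i₁ : ℕ)) ≠ 0 := fun h => h0 (by rw [h, zero_mul])
    have h2 : ((X : F[X]) ^ (i : ℕ) * p i).coeff M ≠ 0 := fun h => h0 (by rw [h, mul_zero])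
    have hpi : p i ≠ 0 := by
      intro h
      rw [h] at h1; simp at h1
    have hiT : i ∈ T := by simp [hT, hpi]
    have hφle : (i : ℕ) + (p i).natDegree ≤ M := Finset.le_sup (f := φ) hiT
    have hiM : (i : ℕ) ≤ M := by
      have : (i : ℕ) ≤ φ i := Nat.le_add_right _ _
      omega
    have h2' : (p i).coeff (M - (i : ℕ)) ≠ 0 := by
      have : ((X : F[X]) ^ (i : ℕ) * p i).coeff M = (p i).coeff (M - (i : ℕ)) := by
        have := Polynomial.coeff_X_pow_mul (p i) (i : ℕ) (M - (i : ℕ))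
        rw [Nat.sub_add_cancel hiM] at this
        exact this
      rwa [this] at h2
    have hd2 : M - (i : ℕ) ≤ (p i).natDegree := Polynomial.le_natDegree_of_ne_zero h2'
    have hd1 : M - (i₁ : ℕ) ≤ (p i).natDegree := Polynomial.le_natDegree_of_ne_zero h1
    have hφi : φ i = M := by simp only [hφ]; omega
    have hiT' : i ∈ T' := by simp [hT', hiT, hφi]
    have hle : i₁ ≤ i := T'.min'_le i hiT'
    have hi₁M : (i₁ : ℕ) ≤ M := by omega
    have : (i : ℕ) ≤ (i₁ : ℕ) := by omega
    exact hne' (le_antisymm (by exact_mod_cast this) hle)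
  rw [Finset.sum_eq_single i₁ (fun i _ hi => hterm i hi) (fun h => absurd (Finset.mem_univ i₁) h)]
    at key
  have hcoeffM : ((X : F[X]) ^ (i₁ : ℕ) * p i₁).coeff M = (p i₁).coeff (M - (i₁ : ℕ)) := by
    have := Polynomial.coeff_X_pow_mul (p i₁) (i₁ : ℕ) (M - (i₁ : ℕ))
    have hi₁M : (i₁ : ℕ) ≤ M := by omega
    rw [Nat.sub_add_cancel hi₁M] at this
    exact this
  rw [hcoeffM, mul_self_eq_zero] at key
  rw [← hdeg₁] at key
  exact (Polynomial.leadingCoeff_ne_zero.mpr hpi₁) key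

theorem mulmuley_ker {F : Type*} [Field F] {k : ℕ} (S₀ : Matrix (Fin k) (Fin k) F)
    (hsym : S₀ᵀ = S₀) (v : Fin k → RatFunc F)
    (hv : (S₀.map (algebraMap F (RatFunc F))).mulVec
      ((Matrix.diagonal fun i : Fin k => (RatFunc.X : RatFunc F) ^ (i : ℕ)).mulVec
        ((S₀.map (algebraMap F (RatFunc F))).mulVec v)) = 0) :
    (S₀.map (algebraMap F (RatFunc F))).mulVec v = 0 := by
  classical
  set ι : F[X] →+* RatFunc F := (algebraMap F[X] (RatFunc F) : F[X] →+* RatFunc F) with hι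
  have hιinj : Function.Injective ι := RatFunc.algebraMap_injective F
  set h : F[X] := ∏ j : Fin k, (v j).denom with hh
  have hhne : h ≠ 0 := Finset.prod_ne_zero_iff.mpr fun j _ => RatFunc.denom_ne_zero (v j)
  set g : Fin k → F[X] := fun j => (v j).num * ∏ j' ∈ Finset.univ.erase j, (v j').denom with hg
  have hgv : ∀ j, ι (g j) = ι h * v j := by
    intro j
    have hsplit : h = (v j).denom * ∏ j' ∈ Finset.univ.erase j, (v j').denom :=
      (Finset.mul_prod_erase Finset.univ _ (Finset.mem_univ j)).symm
    have hnum : ι (v j).num = v j * ι (v j).denom :=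
      (div_eq_iff (RatFunc.algebraMap_ne_zero (RatFunc.denom_ne_zero (v j)))).mp
        (RatFunc.num_div_denom (v j))
    rw [hg]
    simp only [_root_.map_mul, hsplit]
    rw [hnum]; ring
  set z : Fin k → RatFunc F := (S₀.map (algebraMap F (RatFunc F))).mulVec v with hz
  have hdiag : (Matrix.diagonal fun i : Fin k => (RatFunc.X : RatFunc F) ^ (i : ℕ)).mulVec z
      = fun j : Fin k => (RatFunc.X : RatFunc F) ^ (j : ℕ) * z j :=
    funext fun j => Matrix.mulVec_diagonal _ _ _
  rw [hdiag] at hv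
  have hcomp : ∀ c : F, ι (algebraMap F F[X] c) = algebraMap F (RatFunc F) c := by
    intro c
    rw [hι, ← IsScalarTower.algebraMap_apply]
  set p : Fin k → F[X] := (S₀.map (algebraMap F F[X])).mulVec g with hp
  have factA : ∀ i, ι (p i) = ι h * z i := by
    intro i
    simp only [hp, hz, Matrix.mulVec, dotProduct, Matrix.map_apply, map_sum,
      Finset.mul_sum]
    refine Finset.sum_congr rfl fun j _ => ?_
    rw [_root_.map_mul, hcomp, hgv]; ring
  -- hypothesis over F[X]
  have factB : ∀ i, ∑ j : Fin k, algebraMap F F[X] (S₀ i j) * ((X : F[X]) ^ (j : ℕ) * p j) = 0 := by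
    intro i
    apply hιinj
    rw [map_sum, map_zero]
    have hvi : ∑ j : Fin k, algebraMap F (RatFunc F) (S₀ i j)
        * ((RatFunc.X : RatFunc F) ^ (j : ℕ) * z j) = 0 := by
      have := congrFun hv i
      simpa [Matrix.mulVec, dotProduct, Matrix.map_apply] using this
    calc ∑ j : Fin k, ι (algebraMap F F[X] (S₀ i j) * (X ^ (j : ℕ) * p j))
        = ι h * ∑ j : Fin k, algebraMap F (RatFunc F) (S₀ i j) *
            ((RatFunc.X : RatFunc F) ^ (j : ℕ) * z j) := by
          rw [Finset.mul_sum]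
          refine Finset.sum_congr rfl fun j _ => ?_
          have hX : ι (X : F[X]) = RatFunc.X := RatFunc.algebraMap_X
          simp only [_root_.map_mul, map_pow, hcomp, hX, factA]
          ring
      _ = 0 := by rw [hvi, mul_zero]
  have factC : ∀ a b : ℕ,
      ∑ i : Fin k, (p i).coeff a * ((X : F[X]) ^ (i : ℕ) * p i).coeff b = 0 := by
    intro a b
    have hPi : ∀ i, (p i).coeff a = ∑ j : Fin k, S₀ i j * (g j).coeff a := by
      intro i
      simp only [hp, Matrix.mulVec, dotProduct, Matrix.map_apply, finset_sum_coeff,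
        Polynomial.algebraMap_eq, Polynomial.coeff_C_mul]
    calc ∑ i : Fin k, (p i).coeff a * ((X : F[X]) ^ (i : ℕ) * p i).coeff b
        = ∑ i : Fin k, ∑ j : Fin k,
            (g j).coeff a * (S₀ j i * ((X : F[X]) ^ (i : ℕ) * p i).coeff b) := by
          refine Finset.sum_congr rfl fun i _ => ?_
          rw [hPi, Finset.sum_mul]
          refine Finset.sum_congr rfl fun j _ => ?_
          have hsym' : S₀ i j = S₀ j i :=
            (Matrix.transpose_apply S₀ j i).symm.trans (congrFun (congrFun hsym j) i)
          rw [hsym']; ring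
      _ = ∑ j : Fin k, (g j).coeff a *
            (∑ i : Fin k, S₀ j i * ((X : F[X]) ^ (i : ℕ) * p i).coeff b) := by
          rw [Finset.sum_comm]
          simp [Finset.mul_sum]
      _ = 0 := by
          refine Finset.sum_eq_zero fun j _ => ?_
          have hrow : ∑ i : Fin k, S₀ j i * ((X : F[X]) ^ (i : ℕ) * p i).coeff b = 0 := by
            have := congrArg (fun q => q.coeff b) (factB j)
            simpa [finset_sum_coeff, Polynomial.algebraMap_eq, Polynomial.coeff_C_mul] using this
          rw [hrow, mul_zero]
  have hp0 : p = 0 := mulmuley_core p factC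
  funext i
  have hAi := factA i
  rw [hp0] at hAi
  simp only [Pi.zero_apply, map_zero] at hAi
  have hhne' : ι h ≠ 0 := by
    simpa [hι] using RatFunc.algebraMap_ne_zero (K := F) hhne
  rcases mul_eq_zero.mp hAi.symm with h1 | h1
  · exact absurd h1 hhne'
  · exact h1

theorem mulmuley_descend {F K : Type*} [Field F] [Field K] [Algebra F K]
    {m n : ℕ} (A : Matrix (Fin m) (Fin n) F) (b : Fin m → F)
    (hx : ∃ x : Fin n → K, (A.map (algebraMap F K)).mulVec x = fun i => algebraMap F K (b i)) :
    ∃ x : Fin n → F, A.mulVec x = b := by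
  classical
  by_contra hsol
  push_neg at hsol
  have hb : b ∉ LinearMap.range A.mulVecLin := by
    rintro ⟨x, hxb⟩
    exact hsol x hxb
  obtain ⟨f, hfb, hfmap⟩ := Submodule.exists_dual_map_eq_bot_of_notMem hb inferInstance
  have hfA : ∀ y : Fin n → F, f (A.mulVec y) = 0 := by
    intro y
    have hmem : A.mulVec y ∈ LinearMap.range A.mulVecLin := ⟨y, rfl⟩
    have := Submodule.mem_map_of_mem (f := f) hmem
    rw [hfmap] at this
    exact this
  set c : Fin m → F := fun i => f (fun j => if i = j then 1 else 0) with hc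
  have hfc : ∀ y : Fin m → F, f y = c ⬝ᵥ y := by
    intro y
    conv_lhs => rw [pi_eq_sum_univ y, map_sum]
    rw [dotProduct]
    refine Finset.sum_congr rfl fun i _ => ?_
    rw [LinearMap.map_smul, smul_eq_mul, hc, mul_comm]
  have hcA : ∀ j, ∑ i, c i * A i j = 0 := by
    intro j
    have h1 : f (A.mulVec (Pi.single j 1)) = 0 := hfA _
    rw [hfc, dotProduct_mulVec, dotProduct_single, mul_one] at h1
    simpa [vecMul, dotProduct] using h1
  obtain ⟨x, hxe⟩ := hx
  have h1 : (fun i => algebraMap F K (c i)) ⬝ᵥ (fun i => algebraMap F K (b i)) = 0 := by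
    rw [← hxe, dotProduct_mulVec]
    have hz : (fun i => algebraMap F K (c i)) ᵥ* A.map (algebraMap F K) = 0 := by
      funext j
      simp only [vecMul, dotProduct, Matrix.map_apply, Pi.zero_apply]
      rw [← map_zero (algebraMap F K), ← hcA j, map_sum]
      exact Finset.sum_congr rfl fun i _ => (_root_.map_mul _ _ _).symm
    rw [hz, zero_dotProduct]
  have h2 : algebraMap F K (c ⬝ᵥ b) = 0 := by
    rw [← h1, dotProduct, dotProduct, map_sum]
    exact Finset.sum_congr rfl fun i _ => _root_.map_mul _ _ _
  have h3 : c ⬝ᵥ b = 0 := (algebraMap F K).injective (by rw [h2, map_zero])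
  rw [← hfc] at h3
  exact hfb h3

/-- Solvability of the linear system `A · x = b` is equivalent to `q(C) · (χ · b̃) = 0`,
where `C = χ · S`, `p_C` is the characteristic polynomial of `C`, `s` is the multiplicity
of `0` as a root of `p_C`, and `q = p_C /ₘ Y^s`. -/
theorem mulmuley_solvability (F : Type*) [Field F] (m n : ℕ)
    (A : Matrix (Fin m) (Fin n) F) (b : Fin m → F)
    (S : Matrix (Fin (m + n)) (Fin (m + n)) (RatFunc F))
    (hS : S = Matrix.reindex finSumFinEquiv finSumFinEquiv
      ((Matrix.fromBlocks 0 A Aᵀ 0).map (algebraMap F (RatFunc F))))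
    (χ : Matrix (Fin (m + n)) (Fin (m + n)) (RatFunc F))
    (hχ : χ = Matrix.diagonal (fun i : Fin (m + n) => (RatFunc.X : RatFunc F) ^ (i : ℕ)))
    (C : Matrix (Fin (m + n)) (Fin (m + n)) (RatFunc F))
    (hC : C = χ * S)
    (s : ℕ) (hs : s = Polynomial.rootMultiplicity 0 C.charpoly)
    (q : Polynomial (RatFunc F)) (hq : q = C.charpoly /ₘ Polynomial.X ^ s)
    (btilde : Fin (m + n) → RatFunc F)
    (hb : btilde = Fin.append (fun i => algebraMap F (RatFunc F) (b i))
      (0 : Fin n → RatFunc F)) :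
    (∃ x : Fin n → F, A.mulVec x = b) ↔
      (Polynomial.aeval C q).mulVec (χ.mulVec btilde) = 0 := by
  classical
  set ι : F →+* RatFunc F := (algebraMap F (RatFunc F) : F →+* RatFunc F) with hi
  set e : Fin m ⊕ Fin n ≃ Fin (m + n) := finSumFinEquiv with he
  set B : Matrix (Fin m ⊕ Fin n) (Fin m ⊕ Fin n) F := Matrix.fromBlocks 0 A Aᵀ 0 with hB
  set S₀ : Matrix (Fin (m + n)) (Fin (m + n)) F := B.submatrix e.symm e.symm with hS₀
  have hS0 : S = S₀.map (algebraMap F (RatFunc F)) := by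
    rw [hS, hS₀, Matrix.reindex_apply, Matrix.submatrix_map]
  have hsym : S₀ᵀ = S₀ := by
    rw [hS₀, Matrix.transpose_submatrix, hB, Matrix.fromBlocks_transpose]
    simp
  set bvec : Fin m → RatFunc F := fun i => ι (b i) with hbv
  have hbt : btilde = (Sum.elim bvec 0) ∘ e.symm := by
    funext j
    have hj : j = e (e.symm j) := (e.apply_symm_apply j).symm
    rcases hsj : e.symm j with i | i
    · rw [hb, Function.comp_apply, hsj, Sum.elim_inl]
      rw [hj, hsj, he, finSumFinEquiv_apply_left, Fin.append_left]
    · rw [hb, Function.comp_apply, hsj, Sum.elim_inr]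
      rw [hj, hsj, he, finSumFinEquiv_apply_right, Fin.append_right]
  -- block computation of S *ᵥ w
  have hSw : ∀ w : Fin (m + n) → RatFunc F, S.mulVec w =
      (Sum.elim ((A.map ι).mulVec (w ∘ e ∘ Sum.inr))
        ((Aᵀ.map ι).mulVec (w ∘ e ∘ Sum.inl))) ∘ e.symm := by
    intro w
    rw [hS0, hS₀, ← Matrix.submatrix_map, Matrix.submatrix_mulVec_equiv]
    congr 1
    rw [hB, Matrix.fromBlocks_map]
    have hw : w ∘ e.symm.symm = Sum.elim (w ∘ e ∘ Sum.inl) (w ∘ e ∘ Sum.inr) := by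
      funext u; rcases u with i | i <;> simp
    rw [hw, Matrix.fromBlocks_mulVec]
    simp only [Matrix.map_zero _ (map_zero (algebraMap F (RatFunc F))), hi, Matrix.zero_mulVec, zero_add, add_zero,
      Sum.elim_comp_inl, Sum.elim_comp_inr]
  -- injectivity of χ
  have hχinj : Function.Injective χ.mulVec := by
    intro y y' hyy
    funext i
    have h1 := congrFun hyy i
    rw [hχ] at h1
    rw [Matrix.mulVec_diagonal, Matrix.mulVec_diagonal] at h1
    exact mul_left_cancel₀ (pow_ne_zero _ (RatFunc.X_ne_zero)) h1
  -- single kernel collapse step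
  have L3 : ∀ y : Fin (m + n) → RatFunc F, C.mulVec (C.mulVec y) = 0 → C.mulVec y = 0 := by
    intro y hy
    have h1 : χ *ᵥ S *ᵥ χ *ᵥ S *ᵥ y = 0 := by
      rw [hC] at hy
      simpa only [← Matrix.mulVec_mulVec] using hy
    have h2 : S *ᵥ χ *ᵥ S *ᵥ y = 0 := by
      apply hχinj
      rw [Matrix.mulVec_zero]
      exact h1
    have h3 := mulmuley_ker S₀ hsym y (by rw [← hS0, ← hχ]; exact h2)
    rw [← hS0] at h3
    rw [hC, ← Matrix.mulVec_mulVec, h3, Matrix.mulVec_zero]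
  -- iterated kernel collapse
  have Qlem : ∀ t : ℕ, ∀ y : Fin (m + n) → RatFunc F,
      (C ^ t).mulVec y = 0 → C.mulVec y = 0 := by
    intro t
    induction t with
    | zero => intro y hy; rw [pow_zero, Matrix.one_mulVec] at hy; rw [hy, Matrix.mulVec_zero]
    | succ t ih =>
      intro y hy
      rw [pow_succ, ← Matrix.mulVec_mulVec] at hy
      exact L3 y (ih (C.mulVec y) hy)
  -- charpoly factorization
  have hmonic : C.charpoly.Monic := Matrix.charpoly_monic C
  have hpne : C.charpoly ≠ 0 := hmonic.ne_zero
  have hfact : (Polynomial.X : (RatFunc F)[X]) ^ s * q = C.charpoly := by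
    have h0 := C.charpoly.pow_mul_divByMonic_rootMultiplicity_eq 0
    rw [map_zero, sub_zero, ← hs] at h0
    rw [hq]; exact h0
  have hq0 : q.coeff 0 ≠ 0 := by
    have h0 := Polynomial.eval_divByMonic_pow_rootMultiplicity_ne_zero 0 hpne
    rw [map_zero, sub_zero, ← hs, ← hq] at h0
    rwa [Polynomial.coeff_zero_eq_eval_zero]
  have hCH : Polynomial.aeval C C.charpoly = 0 := Matrix.aeval_self_charpoly C
  -- commuting facts
  have hcommq : Polynomial.aeval C q * C = C * Polynomial.aeval C q := by
    have h1 := _root_.map_mul (Polynomial.aeval C) q Polynomial.X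
    have h2 := _root_.map_mul (Polynomial.aeval C) Polynomial.X q
    rw [Polynomial.aeval_X] at h1 h2
    rw [← h1, ← h2, mul_comm]
  -- q(C) kills the image of C
  have hCq : ∀ w : Fin (m + n) → RatFunc F,
      (Polynomial.aeval C q).mulVec (C.mulVec w) = 0 := by
    intro w
    have hys : (C ^ s).mulVec ((Polynomial.aeval C q).mulVec w) = 0 := by
      rw [Matrix.mulVec_mulVec]
      have hx1 : C ^ s * Polynomial.aeval C q
          = Polynomial.aeval C (Polynomial.X ^ s * q) := by
        rw [_root_.map_mul, _root_.map_pow, Polynomial.aeval_X]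
      rw [hx1, hfact, hCH, Matrix.zero_mulVec]
    have hy := Qlem s _ hys
    calc (Polynomial.aeval C q).mulVec (C.mulVec w)
        = (Polynomial.aeval C q * C).mulVec w := Matrix.mulVec_mulVec _ _ _
      _ = (C * Polynomial.aeval C q).mulVec w := by rw [hcommq]
      _ = C.mulVec ((Polynomial.aeval C q).mulVec w) := (Matrix.mulVec_mulVec _ _ _).symm
      _ = 0 := hy
  constructor
  · -- forward
    rintro ⟨x, hx⟩
    set w : Fin (m + n) → RatFunc F :=
      (Sum.elim (0 : Fin m → RatFunc F) (fun i => ι (x i))) ∘ e.symm with hw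
    have hSwb : S.mulVec w = btilde := by
      rw [hSw w, hbt]
      congr 1
      have hcr : w ∘ e ∘ Sum.inr = fun i => ι (x i) := by
        funext i; simp [hw]
      have hcl : w ∘ e ∘ Sum.inl = (0 : Fin m → RatFunc F) := by
        funext i; simp [hw]
      have h1 : (A.map ι).mulVec (w ∘ e ∘ Sum.inr) = bvec := by
        rw [hcr]
        funext i
        rw [hbv]
        have h2 := RingHom.map_mulVec ι A x i
        rw [hx] at h2
        exact h2.symm
      have h2 : (Aᵀ.map ι).mulVec (w ∘ e ∘ Sum.inl) = 0 := by
        rw [hcl, Matrix.mulVec_zero]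
      rw [h1, h2]
    have hcb : χ.mulVec btilde = C.mulVec w := by
      rw [hC, ← Matrix.mulVec_mulVec, hSwb]
    rw [hcb]
    exact hCq w
  · -- backward
    intro H
    obtain ⟨w, hw⟩ : ∃ w, C.mulVec w = χ.mulVec btilde := by
      by_cases hs0 : s = 0
      · -- C invertible
        have hc0 : C.charpoly.coeff 0 ≠ 0 := by
          rw [← hfact, hs0, pow_zero, one_mul]; exact hq0
        have hdet : IsUnit C.det := by
          rw [Matrix.det_eq_sign_charpoly_coeff]
          exact isUnit_iff_ne_zero.mpr
            (mul_ne_zero (pow_ne_zero _ (neg_ne_zero.mpr one_ne_zero)) hc0)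
        refine ⟨C⁻¹.mulVec (χ.mulVec btilde), ?_⟩
        rw [Matrix.mulVec_mulVec, Matrix.mul_nonsing_inv C hdet, Matrix.one_mulVec]
      · obtain ⟨t, ht⟩ : ∃ t, s = t + 1 := ⟨s - 1, by omega⟩
        have hcop1 : IsCoprime (Polynomial.X : (RatFunc F)[X]) q := by
          refine ⟨-(Polynomial.C (q.coeff 0)⁻¹ * q.divX), Polynomial.C (q.coeff 0)⁻¹, ?_⟩
          have hx1 := Polynomial.X_mul_divX_add q
          have hcc : Polynomial.C (q.coeff 0)⁻¹ * Polynomial.C (q.coeff 0) = 1 := by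
            rw [← Polynomial.C_mul, inv_mul_cancel₀ hq0, Polynomial.C_1]
          linear_combination (-(Polynomial.C (q.coeff 0)⁻¹)) * hx1 + hcc
        have hcop : IsCoprime ((Polynomial.X : (RatFunc F)[X]) ^ s) q := hcop1.pow_left
        obtain ⟨u, vp, huv⟩ := hcop
        have haev : Polynomial.aeval C u * C ^ s
            + Polynomial.aeval C vp * Polynomial.aeval C q = 1 := by
          have h0 := congrArg (Polynomial.aeval C) huv
          rw [_root_.map_add, _root_.map_mul, _root_.map_mul, _root_.map_pow,
            Polynomial.aeval_X, _root_.map_one] at h0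
          exact h0
        have hcommu : C * Polynomial.aeval C u = Polynomial.aeval C u * C := by
          have h1 := _root_.map_mul (Polynomial.aeval C) u Polynomial.X
          have h2 := _root_.map_mul (Polynomial.aeval C) Polynomial.X u
          rw [Polynomial.aeval_X] at h1 h2
          rw [← h1, ← h2, mul_comm]
        set v := χ.mulVec btilde with hv
        refine ⟨(Polynomial.aeval C u * C ^ t).mulVec v, ?_⟩
        have h1 : v = (Polynomial.aeval C u * C ^ s).mulVec v
            + (Polynomial.aeval C vp * Polynomial.aeval C q).mulVec v := by
          rw [← Matrix.add_mulVec, haev, Matrix.one_mulVec]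
        have h2 : (Polynomial.aeval C vp * Polynomial.aeval C q).mulVec v = 0 := by
          rw [← Matrix.mulVec_mulVec, H, Matrix.mulVec_zero]
        rw [Matrix.mulVec_mulVec]
        rw [show C * (Polynomial.aeval C u * C ^ t) = Polynomial.aeval C u * C ^ s from by
          rw [← mul_assoc, hcommu, mul_assoc, ← pow_succ', ← ht]]
        conv_rhs => rw [h1, h2, add_zero]
    -- conclude solvability
    have hSwb : S.mulVec w = btilde := by
      apply hχinj
      rw [Matrix.mulVec_mulVec, ← hC, hw]
    rw [hSw w, hbt] at hSwb
    have hAx : (A.map ι).mulVec (w ∘ e ∘ Sum.inr) = bvec := by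
      funext i
      have h0 := congrFun hSwb (e (Sum.inl i))
      simpa [Equiv.symm_apply_apply] using h0
    exact mulmuley_descend A b ⟨w ∘ e ∘ Sum.inr, hAx⟩
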